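/- arXiv:1607.01271 — 3 statements merged into one kernel-verified Lean document; each statement's English description precedes it below -/
import Mathlib

section
/- Let λ > 0 and let δ : ℝ → ℝ be a non-increasing positive function. Define a sequence by x₁ = ((λ − δ(x₀))/(1 + δ(x₀)))·x₀ and x_{n+1} = ((1+λ)/(1+δ(x_n)))·x_n for n ≥ 1, where x₀ > 0 is chosen so that all x_n are positive and increasing. Then for all n ≥ 1: ∑_{j=0}^{n−1} (λ − δ(x_j))·x_j ≥ (1 + δ(x_{n−1}))·x_n. -/
theorem stmt_8 (lam : ℝ) (hlam : 0 < lam) (δ : ℝ → ℝ) (hδpos : ∀ x, 0 < δ x)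
    (hδmono : Antitone δ) (x : ℕ → ℝ) (hx0 : 0 < x 0)
    (hx1 : x 1 = (lam - δ (x 0)) / (1 + δ (x 0)) * x 0)
    (hxrec : ∀ n ≥ 1, x (n + 1) = (1 + lam) / (1 + δ (x n)) * x n)
    (hpos : ∀ n, 0 < x n) (hmono : StrictMono x) :
    ∀ n ≥ 1,
      (1 + δ (x (n - 1))) * x n ≤ ∑ j ∈ Finset.range n, (lam - δ (x j)) * x j := by
  intro n hn
  induction n with
  | zero => omega
  | succ m ih =>
    rcases Nat.eq_or_lt_of_le hn with h1 | h1
    · -- m + 1 = 1, i.e. m = 0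
      have hm : m = 0 := by omega
      subst hm
      have hne : (1 + δ (x 0)) ≠ 0 := by have := hδpos (x 0); linarith
      simp [Finset.sum_range_one, hx1]
      field_simp
      exact le_refl _
    · have hm : 1 ≤ m := by omega
      have ih' := ih hm
      have hrec := hxrec m hm
      have hne : (0:ℝ) < 1 + δ (x m) := by have := hδpos (x m); linarith
      have hδle : δ (x m) ≤ δ (x (m - 1)) := hδmono (le_of_lt (hmono (by omega)))
      have hxm : 0 < x m := hpos m
      rw [Finset.sum_range_succ]
      have hsucc : (m + 1 - 1) = m := rfl
      rw [hsucc]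
      have key : (1 + δ (x m)) * x (m + 1) = (1 + lam) * x m := by
        rw [hrec]; field_simp
      calc (1 + δ (x m)) * x (m + 1) = (1 + lam) * x m := key
        _ = (1 + δ (x m)) * x m + (lam - δ (x m)) * x m := by ring
        _ ≤ (1 + δ (x (m - 1))) * x m + (lam - δ (x m)) * x m := by nlinarith
        _ ≤ _ := by linarith
end

section
/- Let f be entire, a ∈ ℂ a fixed point of f with |f'(a)| = λ > 1, and suppose |f'(w)| ≥ λ for all w in a disk D(a, r) on which f is injective. Suppose further there is a domain V with closure contained in D(a,r) such that f : V → D(a,r) is bijective. Then for every n ∈ ℕ there exists a domain V_n with closure contained in D(a,r) such that f^n : V_n → D(a,r) is bijective, and |(f^n)'(w)| ≥ λ^n for all w ∈ V_n. -/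
open Topology in
theorem stmt_18 (f : ℂ → ℂ) (hf : Differentiable ℂ f) (a : ℂ) (r lam : ℝ) (hr : 0 < r)
    (hfix : f a = a) (hlam : ‖deriv f a‖ = lam) (hlam1 : 1 < lam)
    (hexp : ∀ w ∈ Metric.ball a r, lam ≤ ‖deriv f w‖)
    (hinj : Set.InjOn f (Metric.ball a r))
    (V : Set ℂ) (hVopen : IsOpen V) (hVconn : IsConnected V)
    (hVcl : closure V ⊆ Metric.ball a r)
    (hVbij : Set.BijOn f V (Metric.ball a r)) :
    ∀ n : ℕ, 1 ≤ n → ∃ Vn : Set ℂ, IsOpen Vn ∧ IsConnected Vn ∧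
      closure Vn ⊆ Metric.ball a r ∧ Set.BijOn (f^[n]) Vn (Metric.ball a r) ∧
      ∀ w ∈ Vn, lam ^ n ≤ ‖deriv (f^[n]) w‖ := by
  have hVsub : V ⊆ Metric.ball a r := subset_closure.trans hVcl
  have hlam0 : (0 : ℝ) < lam := lt_trans one_pos hlam1
  -- nonvanishing derivative on the ball
  have hd0 : ∀ w ∈ Metric.ball a r, deriv f w ≠ 0 := by
    intro w hw h0
    have := hexp w hw
    rw [h0, norm_zero] at this
    linarith
  -- strict derivative everywhere
  have hstrict : ∀ w : ℂ, HasStrictDerivAt f (deriv f w) w := by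
    intro w
    obtain ⟨p, hp⟩ := (hf.analyticAt w)
    have h1 := hp.hasStrictDerivAt
    rw [h1.hasDerivAt.deriv]; exact h1
  -- f is "open" on subsets of the ball
  have hopen : ∀ U : Set ℂ, U ⊆ Metric.ball a r → IsOpen U → IsOpen (f '' U) := by
    intro U hUb hUo
    rw [isOpen_iff_mem_nhds]
    rintro _ ⟨x, hx, rfl⟩
    have hmap : Filter.map f (𝓝 x) = 𝓝 (f x) :=
      (hstrict x).map_nhds_eq (hd0 x (hUb hx))
    rw [← hmap]
    exact Filter.image_mem_map (hUo.mem_nhds hx)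
  -- the inverse branch on the ball
  set g : ℂ → ℂ := Function.invFunOn f V with hg
  have hgleft : ∀ x ∈ V, g (f x) = x := fun x hx => hVbij.injOn.leftInvOn_invFunOn hx
  have hgmem : ∀ y ∈ Metric.ball a r, g y ∈ V ∧ f (g y) = y := by
    intro y hy
    obtain ⟨x, hx, rfl⟩ := hVbij.surjOn hy
    rw [hgleft x hx]
    exact ⟨hx, rfl⟩
  have hgcont : ContinuousOn g (Metric.ball a r) := by
    rw [continuousOn_iff]
    intro y hy t hto hgt
    refine ⟨f '' (t ∩ V), hopen _ (Set.inter_subset_right.trans hVsub)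
      (hto.inter hVopen), ?_, ?_⟩
    · obtain ⟨hgV, hfg⟩ := hgmem y hy
      exact ⟨g y, ⟨hgt, hgV⟩, hfg⟩
    · rintro z ⟨⟨v, ⟨hvt, hvV⟩, rfl⟩, -⟩
      rw [Set.mem_preimage, hgleft v hvV]
      exact hvt
  intro n hn
  induction n, hn using Nat.le_induction with
  | base =>
    refine ⟨V, hVopen, hVconn, hVcl, by simpa using hVbij, ?_⟩
    intro w hw
    simpa using hexp w (hVsub hw)
  | succ n hn ih =>
    obtain ⟨Vn, hVno, hVnc, hVncl, hVnbij, hVnder⟩ := ih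
    have hVnsub : Vn ⊆ Metric.ball a r := subset_closure.trans hVncl
    refine ⟨V ∩ f ⁻¹' Vn, hVopen.inter (hVno.preimage hf.continuous), ?_, ?_, ?_, ?_⟩
    · -- connected: it equals g '' Vn
      have heq : V ∩ f ⁻¹' Vn = g '' Vn := by
        ext x
        constructor
        · rintro ⟨hxV, hxp⟩
          exact ⟨f x, hxp, hgleft x hxV⟩
        · rintro ⟨y, hy, rfl⟩
          obtain ⟨hgV, hfg⟩ := hgmem y (hVnsub hy)
          exact ⟨hgV, by simpa [hfg] using hy⟩
      rw [heq]
      exact hVnc.image g (hgcont.mono hVnsub)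
    · exact (closure_mono Set.inter_subset_left).trans hVcl
    · -- bijection
      have hb1 : Set.BijOn f (V ∩ f ⁻¹' Vn) Vn := by
        refine ⟨fun x hx => hx.2, hVbij.injOn.mono Set.inter_subset_left, ?_⟩
        intro y hy
        obtain ⟨x, hx, rfl⟩ := hVbij.surjOn (hVnsub hy)
        exact ⟨x, ⟨hx, hy⟩, rfl⟩
      have := hVnbij.comp hb1
      rwa [← Function.iterate_succ] at this
    · intro w hw
      have hwb : w ∈ Metric.ball a r := hVsub hw.1
      have hfw : f w ∈ Vn := hw.2
      have hdiffn : Differentiable ℂ (f^[n]) := Differentiable.iterate hf n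
      rw [Function.iterate_succ, deriv_comp w (hdiffn.differentiableAt)
        (hf.differentiableAt), norm_mul, pow_succ]
      exact mul_le_mul (hVnder (f w) hfw) (hexp w hwb) hlam0.le
        (norm_nonneg _)
end

section
/- Let f be entire, z ∈ ℂ with χ̄(f, z) := limsup_{n→∞} (1/n) log (f^n)^#(z) = ∞, and let ζ ∈ ℂ, m, k ∈ ℕ be such that f^m(ζ) = f^k(z) and (f^m)'(ζ) ≠ 0. Then χ̄(f, ζ) = ∞ as well. -/
open Filter

/-- The upper Lyapunov exponent of `f` at `z`, as an extended real number. -/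
noncomputable def upperLyapunov (f : ℂ → ℂ) (z : ℂ) : EReal :=
  limsup (fun n : ℕ =>
    ((Real.log (‖deriv (f^[n]) z‖ / (1 + ‖f^[n] z‖ ^ 2)) / n : ℝ) : EReal))
    atTop

private lemma deriv_iter_add (f : ℂ → ℂ) (hf : Differentiable ℂ f) (a b : ℕ) (x : ℂ) :
    deriv (f^[a + b]) x = deriv (f^[a]) (f^[b] x) * deriv (f^[b]) x := by
  rw [Function.iterate_add]
  exact deriv_comp x ((hf.iterate a) _) ((hf.iterate b) _)

private lemma lyap_top_iff (f : ℂ → ℂ) (z : ℂ) :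
    upperLyapunov f z = ⊤ ↔ ∀ M : ℝ, ∃ᶠ n in atTop,
      M < Real.log (‖deriv (f^[n]) z‖ / (1 + ‖f^[n] z‖ ^ 2)) / n := by
  constructor
  · intro h M
    by_contra hc
    rw [Filter.not_frequently] at hc
    have : upperLyapunov f z ≤ (M : EReal) :=
      Filter.limsup_le_of_le (h := by
        filter_upwards [hc] with n hn
        exact_mod_cast not_lt.mp hn)
    rw [h] at this
    exact absurd this (not_le.mpr (EReal.coe_lt_top M))
  · intro h
    by_contra hc
    have hlt : upperLyapunov f z < ⊤ := Ne.lt_top hc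
    obtain ⟨r, hr1, hr2⟩ := EReal.lt_iff_exists_real_btwn.mp hlt
    have hev := Filter.eventually_lt_of_limsup_lt hr1
    have := (h r).and_eventually hev
    obtain ⟨n, h1, h2⟩ := this.exists
    exact absurd h1 (not_lt.mpr (le_of_lt (by exact_mod_cast h2)))

theorem stmt_19 (f : ℂ → ℂ) (hf : Differentiable ℂ f) (z ζ : ℂ) (m k : ℕ)
    (hlyap : upperLyapunov f z = ⊤)
    (horb : f^[m] ζ = f^[k] z) (hd : deriv (f^[m]) ζ ≠ 0) :
    upperLyapunov f ζ = ⊤ := by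
  set A : ℕ → ℝ := fun n =>
    Real.log (‖deriv (f^[n]) z‖ / (1 + ‖f^[n] z‖ ^ 2)) with hA
  -- Step 1: all derivatives along the orbit of z are nonzero
  have H : ∀ n, deriv (f^[n]) z ≠ 0 := by
    by_contra hc
    push_neg at hc
    obtain ⟨n₀, h0⟩ := hc
    have hzero : ∀ n ≥ n₀, deriv (f^[n]) z = 0 := by
      intro n hn
      have : n = (n - n₀) + n₀ := (Nat.sub_add_cancel hn).symm
      rw [this, deriv_iter_add f hf, h0, mul_zero]
    have hev : ∀ᶠ n in atTop, A n / (n : ℝ) = 0 := by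
      filter_upwards [eventually_ge_atTop n₀] with n hn
      simp [hA, hzero n hn]
    have : upperLyapunov f z = ((0 : ℝ) : EReal) := by
      have : upperLyapunov f z = limsup (fun _ : ℕ => ((0 : ℝ) : EReal)) atTop := by
        apply Filter.limsup_congr
        filter_upwards [hev] with n hn
        rw [show Real.log (‖deriv (f^[n]) z‖ / (1 + ‖f^[n] z‖ ^ 2)) / n
            = A n / n from rfl, hn]
      rw [this, Filter.limsup_const]
    rw [hlyap] at this
    exact absurd this (by simp)
  set w : ℂ := f^[k] z with hw
  set a : ℂ := deriv (f^[k]) z with ha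
  set b : ℂ := deriv (f^[m]) ζ with hb
  have ha0 : a ≠ 0 := H k
  -- derivative along the orbit of w is nonzero
  have hder : ∀ j, deriv (f^[j + k]) z = deriv (f^[j]) w * a := fun j =>
    deriv_iter_add f hf j k z
  have hW : ∀ j, deriv (f^[j]) w ≠ 0 := by
    intro j hj
    exact H (j + k) (by rw [hder j, hj, zero_mul])
  -- orbit relation for ζ
  have horbit : ∀ j, f^[j + m] ζ = f^[j + k] z := by
    intro j
    rw [Function.iterate_add_apply, horb, ← Function.iterate_add_apply]
  set c : ℝ := Real.log (‖b‖ / ‖a‖) with hc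
  set B : ℕ → ℝ := fun n =>
    Real.log (‖deriv (f^[n]) ζ‖ / (1 + ‖f^[n] ζ‖ ^ 2)) with hB
  have hD : ∀ (u : ℂ), (0:ℝ) < 1 + ‖u‖ ^ 2 := fun u => by positivity
  have hBA : ∀ j, B (j + m) = A (j + k) + c := by
    intro j
    have h1 : deriv (f^[j + m]) ζ = deriv (f^[j]) w * b := by
      rw [deriv_iter_add f hf j m ζ, horb]
    have h2 : ‖deriv (f^[j + k]) z‖ = ‖deriv (f^[j]) w‖ * ‖a‖ := by
      rw [hder j, norm_mul]
    have hwj : ‖deriv (f^[j]) w‖ ≠ 0 := by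
      simpa using hW j
    have haa : ‖a‖ ≠ 0 := by simpa using ha0
    have hbb : ‖b‖ ≠ 0 := by simpa using hd
    have key : ‖deriv (f^[j + m]) ζ‖ / (1 + ‖f^[j+m] ζ‖ ^ 2)
        = (‖deriv (f^[j + k]) z‖ / (1 + ‖f^[j+k] z‖ ^ 2))
          * (‖b‖ / ‖a‖) := by
      rw [h1, norm_mul, horbit j, h2]
      field_simp
    simp only [hB, hA]
    rw [horbit j] at key ⊢
    rw [key, Real.log_mul (div_ne_zero (by simpa using H (j+k)) (ne_of_gt (hD _)))
      (div_ne_zero hbb haa)]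
  -- Conclude
  rw [lyap_top_iff] at hlyap ⊢
  intro M
  set M₀ : ℝ := 2 * |M| + |c| + 1 with hM₀
  rw [Filter.frequently_atTop]
  intro n₁
  obtain ⟨n, hn, hAn⟩ := Filter.frequently_atTop.mp (hlyap M₀) (max (n₁ + k) (max m (k + 1)))
  have hnk : k + 1 ≤ n := le_trans (le_max_of_le_right (le_max_right _ _)) hn
  have hnm : m ≤ n := le_trans (le_max_of_le_right (le_max_left _ _)) hn
  have hn₁ : n₁ + k ≤ n := le_trans (le_max_left _ _) hn
  set j : ℕ := n - k with hj
  have hjk : j + k = n := Nat.sub_add_cancel (le_of_lt hnk)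
  refine ⟨j + m, by omega, ?_⟩
  have hBval : B (j + m) = A n + c := by rw [hBA j, hjk]
  have hnpos : (0:ℝ) < (n:ℝ) := by
    have : 0 < n := by omega
    exact_mod_cast this
  have hNpos : (0:ℝ) < ((j + m : ℕ):ℝ) := by
    have : 0 < j + m := by omega
    exact_mod_cast this
  have hAn' : M₀ * (n:ℝ) < A n := by
    rw [← lt_div_iff₀ hnpos]; exact hAn
  have h2n : ((j + m : ℕ):ℝ) ≤ 2 * (n:ℝ) := by
    have : j + m ≤ 2 * n := by omega
    exact_mod_cast this
  have hn1 : (1:ℝ) ≤ (n:ℝ) := by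
    have : 1 ≤ n := by omega
    exact_mod_cast this
  show M < B (j + m) / ((j + m : ℕ):ℝ)
  rw [hBval, lt_div_iff₀ hNpos]
  nlinarith [le_abs_self M, neg_abs_le c, abs_nonneg M, abs_nonneg c, hAn', h2n, hn1,
    hNpos, mul_le_mul_of_nonneg_right (le_abs_self M) hNpos.le]
end
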